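/- Let X be a metrisable infinite-dimensional topological vector space with density character κ, and Y a linear subspace. Then the following are equivalent: (i) there is a dense linear subspace V of X with V ∩ Y = {0}; (ii) there is a linear subspace V of X of dimension κ with V ∩ Y = {0}; (iii) κ ≤ dim(X/Y). -/

import Mathlib

open Filter Topology Set

/-- The density character of a topological space: the least cardinality of a dense subset. -/
noncomputable def densChar (X : Type*) [TopologicalSpace X] : Cardinal :=
  ⨅ s : {s : Set X // Dense s}, Cardinal.mk s.1

section Aux

lemma densChar_le_of_dense {X : Type*} [TopologicalSpace X] {s : Set X} (hs : Dense s) :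
    densChar X ≤ Cardinal.mk s :=
  ciInf_le (OrderBot.bddBelow _) (⟨s, hs⟩ : {s : Set X // Dense s})

lemma exists_dense_mk_eq_densChar (X : Type*) [TopologicalSpace X] :
    ∃ s : Set X, Dense s ∧ Cardinal.mk s = densChar X := by
  have hne : Set.Nonempty (Set.range fun s : {s : Set X // Dense s} => Cardinal.mk s.1) :=
    ⟨_, ⟨⟨Set.univ, dense_univ⟩, rfl⟩⟩
  obtain ⟨⟨s, hs⟩, h⟩ := csInf_mem hne
  exact ⟨s, hs, h⟩

variable {X : Type*} [AddCommGroup X] [Module ℝ X] [TopologicalSpace X]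
  [IsTopologicalAddGroup X] [ContinuousSMul ℝ X]

omit [TopologicalSpace X] [IsTopologicalAddGroup X] [ContinuousSMul ℝ X] in
lemma aux_coeff_zero {σ : Type*} [LinearOrder σ] (Z : Submodule ℝ X) (f : σ → X)
    (hf : ∀ i, f i ∉ Z ⊔ Submodule.span ℝ (f '' {j | j < i}))
    (c : σ →₀ ℝ) (hc : (c.sum fun i r => r • f i) ∈ Z) : c = 0 := by
  by_contra hc0
  have hsupp : c.support.Nonempty := Finsupp.support_nonempty_iff.mpr hc0
  set i := c.support.max' hsupp with hi
  have himem : i ∈ c.support := c.support.max'_mem hsupp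
  have hci : c i ≠ 0 := Finsupp.mem_support_iff.mp himem
  have hsum : (c.sum fun i r => r • f i) = c i • f i + ∑ j ∈ c.support.erase i, c j • f j := by
    rw [Finsupp.sum, ← Finset.add_sum_erase _ _ himem]
  have hrest : (∑ j ∈ c.support.erase i, c j • f j) ∈ Submodule.span ℝ (f '' {j | j < i}) := by
    refine Submodule.sum_mem _ fun j hj => Submodule.smul_mem _ _ (Submodule.subset_span ?_)
    exact ⟨j, lt_of_le_of_ne (c.support.le_max' j (Finset.mem_of_mem_erase hj))
      (Finset.ne_of_mem_erase hj), rfl⟩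
  have hmem : c i • f i ∈ Z ⊔ Submodule.span ℝ (f '' {j | j < i}) := by
    have h1 : c i • f i = (c.sum fun i r => r • f i) - ∑ j ∈ c.support.erase i, c j • f j := by
      rw [hsum]; abel
    rw [h1]
    exact Submodule.sub_mem _ (Submodule.mem_sup_left hc) (Submodule.mem_sup_right hrest)
  refine hf i ?_
  have h2 := Submodule.smul_mem _ (c i)⁻¹ hmem
  rwa [smul_smul, inv_mul_cancel₀ hci, one_smul] at h2

omit [TopologicalSpace X] [IsTopologicalAddGroup X] [ContinuousSMul ℝ X] in
lemma aux_disjoint_and_indep {σ : Type*} [LinearOrder σ] (Y : Submodule ℝ X) (f : σ → X)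
    (hf : ∀ i, f i ∉ Y ⊔ Submodule.span ℝ (f '' {j | j < i})) :
    Submodule.span ℝ (Set.range f) ⊓ Y = ⊥ ∧ LinearIndependent ℝ f := by
  constructor
  · rw [eq_bot_iff]
    rintro x hx
    obtain ⟨hx1, hx2⟩ := Submodule.mem_inf.mp hx
    obtain ⟨c, rfl⟩ := (Finsupp.mem_span_range_iff_exists_finsupp).1 hx1
    have hc0 := aux_coeff_zero Y f hf c hx2
    rw [hc0, Finsupp.sum_zero_index]
    exact Submodule.zero_mem ⊥
  · rw [linearIndependent_iff]
    intro l hl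
    refine aux_coeff_zero ⊥ f
      (fun i hi => hf i (SetLike.le_def.mp (sup_le_sup_right bot_le _) hi)) l ?_
    rw [Submodule.mem_bot]
    rwa [Finsupp.linearCombination_apply] at hl

lemma exists_step (Y W : Submodule ℝ X) (d : X) (U : Set X) (hU : U ∈ 𝓝 d)
    {κ : Cardinal} (hκ : Cardinal.aleph0 ≤ κ) (hW : Module.rank ℝ W < κ)
    (hQ : κ ≤ Module.rank ℝ (X ⧸ Y)) :
    ∃ x, x ∈ U ∧ x ∉ Y ⊔ W := by
  classical
  set Z : Submodule ℝ X := Y ⊔ W ⊔ Submodule.span ℝ {d} with hZdef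
  have hW' : Module.rank ℝ ↥(W ⊔ Submodule.span ℝ ({d} : Set X)) < κ := by
    have h1 : Module.rank ℝ ↥(W ⊔ Submodule.span ℝ ({d} : Set X)) ≤
        Module.rank ℝ W + Module.rank ℝ ↥(Submodule.span ℝ ({d} : Set X)) :=
      Submodule.rank_add_le_rank_add_rank _ _
    have h2 : Module.rank ℝ ↥(Submodule.span ℝ ({d} : Set X)) < κ := by
      refine lt_of_le_of_lt (rank_span_le _) ?_
      rw [Cardinal.mk_singleton]
      exact lt_of_lt_of_le Cardinal.one_lt_aleph0 hκ
    exact lt_of_le_of_lt h1 (Cardinal.add_lt_of_lt hκ hW h2)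
  have hZtop : Z ≠ ⊤ := by
    intro htop
    have hmapY : Submodule.map Y.mkQ Y = ⊥ := by
      rw [eq_bot_iff]
      rintro x ⟨y, hy, rfl⟩
      simpa [Submodule.Quotient.mk_eq_zero] using hy
    have hmap : Submodule.map Y.mkQ Z =
        Submodule.map Y.mkQ (W ⊔ Submodule.span ℝ ({d} : Set X)) := by
      rw [hZdef, sup_assoc, Submodule.map_sup, hmapY, bot_sup_eq]
    have h1 : Submodule.map Y.mkQ Z = ⊤ := by
      rw [htop, Submodule.map_top, Submodule.range_mkQ]
    have h2 : Module.rank ℝ (X ⧸ Y) ≤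
        Module.rank ℝ ↥(W ⊔ Submodule.span ℝ ({d} : Set X)) := by
      calc Module.rank ℝ (X ⧸ Y) = Module.rank ℝ ↥(⊤ : Submodule ℝ (X ⧸ Y)) :=
            (rank_top ℝ _).symm
        _ = Module.rank ℝ ↥(Submodule.map Y.mkQ (W ⊔ Submodule.span ℝ ({d} : Set X))) := by
            rw [← h1, hmap]
        _ ≤ _ := rank_map_le _ _
    exact absurd (lt_of_le_of_lt (hQ.trans h2) hW') (lt_irrefl _)
  obtain ⟨w, hw⟩ : ∃ w, w ∉ Z := by
    by_contra hcon
    push_neg at hcon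
    exact hZtop (Submodule.eq_top_iff'.mpr hcon)
  have hcont : Filter.Tendsto (fun ε : ℝ => d + ε • w) (𝓝 0) (𝓝 d) := by
    have hc : Continuous (fun ε : ℝ => d + ε • w) :=
      continuous_const.add (continuous_id.smul continuous_const)
    have h0 : d + (0 : ℝ) • w = d := by simp
    simpa [h0] using hc.tendsto 0
  haveI : Filter.NeBot (𝓝[≠] (0 : ℝ)) := NormedField.nhdsNE_neBot 0
  have hev : (fun ε : ℝ => d + ε • w) ⁻¹' U ∈ 𝓝[≠] (0 : ℝ) :=
    nhdsWithin_le_nhds (hcont hU)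
  obtain ⟨ε, hεU, hεne⟩ := Filter.nonempty_of_mem (Filter.inter_mem hev self_mem_nhdsWithin)
  refine ⟨d + ε • w, hεU, fun hmem => hw ?_⟩
  have hεne' : ε ≠ 0 := hεne
  have hd : d ∈ Z := Submodule.mem_sup_right (Submodule.mem_span_singleton_self d)
  have hx : d + ε • w ∈ Z := Submodule.mem_sup_left hmem
  have hεw : ε • w ∈ Z := by
    have h3 := Submodule.sub_mem _ hx hd
    simpa using h3
  have h4 := Submodule.smul_mem _ ε⁻¹ hεw
  rwa [smul_smul, inv_mul_cancel₀ hεne', one_smul] at h4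

lemma densChar_le_rank_of_dense (V : Submodule ℝ X) (hd : Dense (V : Set X))
    (hr : Cardinal.aleph0 ≤ Module.rank ℝ V) : densChar X ≤ Module.rank ℝ V := by
  classical
  set ι := Module.Basis.ofVectorSpaceIndex ℝ V with hιdef
  set b : Module.Basis ι ℝ V := Module.Basis.ofVectorSpace ℝ V with hbdef
  have hι : Cardinal.mk ι = Module.rank ℝ V := b.mk_eq_rank''
  haveI : Infinite ι := Cardinal.infinite_iff.mpr (hι ▸ hr)
  set f : (ι →₀ ℚ) → X := fun p => p.sum fun i q => (q : ℝ) • ((b i : V) : X) with hfdef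
  set S := Set.range f with hSdef
  have hcard : Cardinal.mk S ≤ Module.rank ℝ V := by
    refine le_trans Cardinal.mk_range_le ?_
    rw [← hι]
    have h1 := Cardinal.mk_finsupp_lift_of_infinite ι ℚ
    have h2 : Cardinal.mk ℚ = Cardinal.aleph0 := Cardinal.mk_eq_aleph0 ℚ
    rw [h2] at h1
    rw [h1, Cardinal.lift_uzero, Cardinal.lift_aleph0]
    exact max_le le_rfl (hι ▸ hr)
  have hsub : (V : Set X) ⊆ closure S := by
    rintro x hx
    set xv : V := ⟨x, hx⟩ with hxv
    set l : ι →₀ ℝ := b.repr xv with hldef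
    set t := l.support with htdef
    set F : (↥t → ℝ) → X := fun g => ∑ i : ↥t, g i • ((b i.1 : V) : X) with hFdef
    have hFc : Continuous F := by
      rw [hFdef]
      exact continuous_finset_sum _ fun i _ => (continuous_apply i).smul continuous_const
    have hxF : F (fun i => l i.1) = x := by
      have h1 : xv = ∑ i ∈ t, l i • b i := by
        conv_lhs => rw [← b.linearCombination_repr xv]
        rw [Finsupp.linearCombination_apply, Finsupp.sum]
      have h2 : x = ∑ i ∈ t, l i • ((b i : V) : X) := by
        have h3 := congrArg (fun z : V => (z : X)) h1
        simpa using h3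
      simp only [hFdef]
      rw [Finset.sum_coe_sort t (fun i => l i • ((b i : V) : X))]
      exact h2.symm
    set T : Set (↥t → ℝ) := {g | ∀ i, g i ∈ Set.range ((↑) : ℚ → ℝ)} with hTdef
    have hT : Dense T := by
      have h1 : Dense (Set.pi Set.univ fun _ : ↥t => Set.range ((↑) : ℚ → ℝ)) :=
        dense_pi Set.univ fun i _ => Rat.denseRange_cast
      have h2 : (Set.pi Set.univ fun _ : ↥t => Set.range ((↑) : ℚ → ℝ)) = T := by
        ext g; simp [hTdef, Set.mem_pi]
      rwa [h2] at h1
    have hFT : F '' T ⊆ S := by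
      rintro _ ⟨g, hg, rfl⟩
      choose q hq using hg
      set p : ι →₀ ℚ := Finsupp.onFinset t (fun i => if h : i ∈ t then q ⟨i, h⟩ else 0)
        (fun i hi => by by_contra hcon; simp [hcon] at hi) with hpdef
      refine ⟨p, ?_⟩
      have hps : p.support ⊆ t := Finsupp.support_onFinset_subset
      simp only [hfdef]
      rw [Finsupp.sum_of_support_subset p hps _ (fun i _ => by simp)]
      simp only [hFdef]
      have hR : (∑ i : ↥t, g i • ((b i.1 : V) : X)) =
          ∑ i ∈ t.attach, ((p i.1 : ℝ)) • ((b i.1 : V) : X) := by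
        rw [Finset.univ_eq_attach]
        refine Finset.sum_congr rfl fun i _ => ?_
        have h3 : ((p i.1 : ℚ) : ℝ) = g i := by
          rw [hpdef]
          simp only [Finsupp.onFinset_apply]
          rw [dif_pos i.2]
          exact hq i
        rw [h3]
      rw [hR, Finset.sum_attach t (fun i => ((p i : ℝ)) • ((b i : V) : X))]
    have hxcl : (fun i : ↥t => l i.1) ∈ closure T := hT _
    have hx1 : x ∈ closure (F '' T) := by
      rw [← hxF]
      exact image_closure_subset_closure_image hFc ⟨_, hxcl, rfl⟩
    exact closure_mono hFT hx1
  have hdense : Dense S := by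
    intro x
    have h1 : closure (V : Set X) ⊆ closure S := closure_minimal hsub isClosed_closure
    exact h1 (hd x)
  exact le_trans (densChar_le_of_dense hdense) hcard

lemma exists_dense_complement [TopologicalSpace.MetrizableSpace X]
    (hinf : ¬ Module.Finite ℝ X) (Y : Submodule ℝ X)
    (h : densChar X ≤ Module.rank ℝ (X ⧸ Y)) :
    ∃ V : Submodule ℝ X, Dense (V : Set X) ∧ Module.rank ℝ V = densChar X ∧ V ⊓ Y = ⊥ := by
  classical
  haveI : Nontrivial X := by
    by_contra hn
    haveI : Subsingleton X := not_nontrivial_iff_subsingleton.mp hn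
    exact hinf inferInstance
  obtain ⟨x0, hx0⟩ := exists_ne (0 : X)
  haveI : Infinite X := by
    refine Infinite.of_injective (fun r : ℝ => r • x0) ?_
    intro r s hrs
    by_contra hne
    have hrs' : r • x0 = s • x0 := hrs
    have h1 : (r - s) • x0 = 0 := by
      rw [sub_smul, hrs', sub_self]
    have h2 := congrArg (fun z => (r - s)⁻¹ • z) h1
    simp only [smul_smul, smul_zero] at h2
    rw [inv_mul_cancel₀ (sub_ne_zero.mpr hne), one_smul] at h2
    exact hx0 h2
  obtain ⟨D, hD, hDcard⟩ := exists_dense_mk_eq_densChar X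
  have hDinf : D.Infinite := by
    by_contra hcon
    rw [Set.not_infinite] at hcon
    have hcl : IsClosed D := hcon.isClosed
    have huniv : D = Set.univ := hcl.closure_eq.symm.trans hD.closure_eq
    exact Set.infinite_univ (huniv ▸ hcon)
  have hκ : Cardinal.aleph0 ≤ densChar X := hDcard ▸ Cardinal.infinite_iff.mp hDinf.to_subtype
  set σ := (Cardinal.ord (densChar X)).ToType with hσdef
  have hmkσ : Cardinal.mk σ = densChar X := Cardinal.mk_ord_toType _
  have hmkDN : Cardinal.mk (↥D × ℕ) = densChar X := by
    rw [Cardinal.mk_prod, Cardinal.lift_uzero, Cardinal.mk_nat, Cardinal.lift_aleph0, hDcard]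
    exact Cardinal.mul_aleph0_eq hκ
  obtain ⟨e⟩ : Nonempty (σ ≃ ↥D × ℕ) := Cardinal.eq.mp (hmkσ.trans hmkDN.symm)
  have hbasis : ∀ x : X, ∃ u : ℕ → Set X, (𝓝 x).HasAntitoneBasis u :=
    fun x => (𝓝 x).exists_antitone_basis
  choose u hu using hbasis
  have wf : WellFounded ((· < ·) : σ → σ → Prop) :=
    (inferInstance : WellFoundedLT σ).wf
  have hcardlt : ∀ i : σ, Cardinal.mk ↥{j : σ | j < i} < densChar X := by
    intro i
    exact Cardinal.card_typein_toType_lt (densChar X) i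
  have key : ∀ (i : σ) (g : ↥{j : σ | j < i} → X),
      ∃ x, x ∈ u ((e i).1 : X) (e i).2 ∧ x ∉ Y ⊔ Submodule.span ℝ (Set.range g) := by
    intro i g
    refine exists_step Y _ _ _ ((hu _).toHasBasis.mem_of_mem trivial) hκ ?_ h
    refine lt_of_le_of_lt (rank_span_le _) ?_
    exact lt_of_le_of_lt Cardinal.mk_range_le (hcardlt i)
  set F : ∀ i : σ, (∀ j, j < i → X) → X :=
    fun i g => Classical.choose (key i (fun j => g j.1 j.2)) with hFdef
  set v : σ → X := fun i => wf.fix F i with hvdef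
  have hv : ∀ i : σ, v i ∈ u ((e i).1 : X) (e i).2 ∧
      v i ∉ Y ⊔ Submodule.span ℝ (Set.range (fun j : ↥{j : σ | j < i} => v j.1)) := by
    intro i
    have hfix : v i = F i (fun j _ => v j) := by
      rw [hvdef]
      exact wf.fix_eq F i
    rw [hfix]
    simp only [hFdef]
    exact Classical.choose_spec (key i (fun j => v j.1))
  have hf' : ∀ i, v i ∉ Y ⊔ Submodule.span ℝ (v '' {j | j < i}) := by
    intro i
    have h1 := (hv i).2
    rwa [← Set.image_eq_range] at h1
  obtain ⟨hVY, hli⟩ := aux_disjoint_and_indep Y v hf'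
  refine ⟨Submodule.span ℝ (Set.range v), ?_, ?_, hVY⟩
  · have hsub : D ⊆ closure ((Submodule.span ℝ (Set.range v) : Submodule ℝ X) : Set X) := by
      intro d hd0
      rw [mem_closure_iff_nhds_basis (hu d).toHasBasis]
      intro n _
      have hei : e (e.symm (⟨d, hd0⟩, n)) = (⟨d, hd0⟩, n) := e.apply_symm_apply _
      have h1 := (hv (e.symm (⟨d, hd0⟩, n))).1
      rw [hei] at h1
      exact ⟨v (e.symm (⟨d, hd0⟩, n)), Submodule.subset_span (Set.mem_range_self _), h1⟩
    intro x
    have h1 : closure D ⊆ closure ((Submodule.span ℝ (Set.range v) : Submodule ℝ X) : Set X) :=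
      closure_minimal hsub isClosed_closure
    exact h1 (hD x)
  · rw [rank_span hli, Cardinal.mk_range_eq v hli.injective, hmkσ]

end Aux

theorem stmt_6 (X : Type*) [AddCommGroup X] [Module ℝ X] [TopologicalSpace X]
    [IsTopologicalAddGroup X] [ContinuousSMul ℝ X] [TopologicalSpace.MetrizableSpace X]
    (hinf : ¬ Module.Finite ℝ X) (Y : Submodule ℝ X) :
    ((∃ V : Submodule ℝ X, Dense (V : Set X) ∧ V ⊓ Y = ⊥) ↔
        densChar X ≤ Module.rank ℝ (X ⧸ Y)) ∧
    ((∃ V : Submodule ℝ X, Module.rank ℝ V = densChar X ∧ V ⊓ Y = ⊥) ↔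
        densChar X ≤ Module.rank ℝ (X ⧸ Y)) := by
  have easy : ∀ V : Submodule ℝ X, V ⊓ Y = ⊥ →
      Module.rank ℝ V ≤ Module.rank ℝ (X ⧸ Y) := by
    intro V hVY
    have hinj : Function.Injective (Y.mkQ.comp V.subtype) := by
      intro a b hab
      have h1 : ((a : X) - b) ∈ Y := by
        rw [← Submodule.Quotient.eq Y]
        simpa using hab
      have h3 : ((a : X) - b) ∈ V ⊓ Y := ⟨sub_mem a.2 b.2, h1⟩
      rw [hVY, Submodule.mem_bot] at h3
      exact Subtype.ext (sub_eq_zero.mp h3)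
    exact LinearMap.rank_le_of_injective _ hinj
  constructor
  · constructor
    · rintro ⟨V, hVd, hVY⟩
      have hrV : Cardinal.aleph0 ≤ Module.rank ℝ V := by
        by_contra hlt
        push_neg at hlt
        haveI : Module.Finite ℝ V := Module.rank_lt_aleph0_iff.mp hlt
        have hcl : IsClosed (V : Set X) := Submodule.closed_of_finiteDimensional V
        have htop : V = ⊤ := by
          have huniv : (V : Set X) = Set.univ := hcl.closure_eq.symm.trans hVd.closure_eq
          exact Submodule.eq_top_iff'.mpr fun x => by
            rw [← SetLike.mem_coe, huniv]; trivial
        exact hinf (Module.Finite.equiv (LinearEquiv.ofTop V htop))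
      exact le_trans (densChar_le_rank_of_dense V hVd hrV) (easy V hVY)
    · intro h
      obtain ⟨V, h1, _, h3⟩ := exists_dense_complement hinf Y h
      exact ⟨V, h1, h3⟩
  · constructor
    · rintro ⟨V, hVr, hVY⟩
      rw [← hVr]
      exact easy V hVY
    · intro h
      obtain ⟨V, _, h2, h3⟩ := exists_dense_complement hinf Y h
      exact ⟨V, h2, h3⟩
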